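/- For all x in (0, π/2), 2·x/(sin x) + x/(tan x) > 3. -/

import Mathlib

open Real

lemma aux_sin_sub_mul_cos_pos {x : ℝ} (hx : 0 < x) (hx2 : x < Real.pi / 2) :
    0 < Real.sin x - x * Real.cos x := by
  have hc : 0 < Real.cos x := Real.cos_pos_of_mem_Ioo ⟨by linarith [Real.pi_pos], hx2⟩
  have ht := Real.lt_tan hx hx2
  rw [Real.tan_eq_sin_div_cos, lt_div_iff₀ hc] at ht
  linarith

lemma aux_g_pos {x : ℝ} (hx : 0 < x) (hx2 : x < Real.pi / 2) :
    0 < 2 - 2 * Real.cos x - x * Real.sin x := by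
  set g : ℝ → ℝ := fun y => 2 - 2 * Real.cos y - y * Real.sin y with hg
  have hderiv : ∀ y, HasDerivAt g (Real.sin y - y * Real.cos y) y := by
    intro y
    have h1 : HasDerivAt (fun y : ℝ => 2 - 2 * Real.cos y) (2 * Real.sin y) y := by
      simpa using ((Real.hasDerivAt_cos y).const_mul 2).const_sub 2
    have h2 : HasDerivAt (fun y : ℝ => y * Real.sin y)
        (1 * Real.sin y + y * Real.cos y) y :=
      (hasDerivAt_id y).mul (Real.hasDerivAt_sin y)
    have := h1.sub h2
    refine this.congr_deriv ?_
    ring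
  have hmono : StrictMonoOn g (Set.Icc 0 (Real.pi / 2)) := by
    apply strictMonoOn_of_deriv_pos (convex_Icc _ _)
    · exact (Continuous.sub (by continuity) (by continuity)).continuousOn
    · intro y hy
      rw [interior_Icc] at hy
      rw [(hderiv y).deriv]
      exact aux_sin_sub_mul_cos_pos hy.1 hy.2
  have h0 : g 0 = 0 := by simp [hg]
  have := hmono (Set.left_mem_Icc.2 (by linarith [Real.pi_pos]))
    ⟨le_of_lt hx, le_of_lt hx2⟩ hx
  rw [h0] at this
  exact this

lemma aux_key {x : ℝ} (hx : 0 < x) (hx2 : x < Real.pi / 2) :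
    3 * Real.sin x < x * (2 + Real.cos x) := by
  set f : ℝ → ℝ := fun y => y * (2 + Real.cos y) - 3 * Real.sin y with hf
  have hderiv : ∀ y, HasDerivAt f (2 - 2 * Real.cos y - y * Real.sin y) y := by
    intro y
    have h1 : HasDerivAt (fun y : ℝ => y * (2 + Real.cos y))
        (1 * (2 + Real.cos y) + y * (-Real.sin y)) y :=
      (hasDerivAt_id y).mul ((Real.hasDerivAt_cos y).const_add 2)
    have h2 : HasDerivAt (fun y : ℝ => 3 * Real.sin y) (3 * Real.cos y) y :=
      (Real.hasDerivAt_sin y).const_mul 3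
    have := h1.sub h2
    refine this.congr_deriv ?_
    ring
  have hmono : StrictMonoOn f (Set.Icc 0 (Real.pi / 2)) := by
    apply strictMonoOn_of_deriv_pos (convex_Icc _ _)
    · exact (Continuous.sub (by continuity) (by continuity)).continuousOn
    · intro y hy
      rw [interior_Icc] at hy
      rw [(hderiv y).deriv]
      exact aux_g_pos hy.1 hy.2
  have h0 : f 0 = 0 := by simp [hf]
  have := hmono (Set.left_mem_Icc.2 (by linarith [Real.pi_pos]))
    ⟨le_of_lt hx, le_of_lt hx2⟩ hx
  rw [h0] at this
  simp only [hf] at this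
  linarith

theorem refined_huygens_circular_second (x : ℝ) (hx : 0 < x) (hx2 : x < Real.pi / 2) :
    2 * (x / Real.sin x) + x / Real.tan x > 3 := by
  have hs : 0 < Real.sin x := Real.sin_pos_of_pos_of_lt_pi hx
    (by linarith [Real.pi_pos])
  have hc : 0 < Real.cos x := Real.cos_pos_of_mem_Ioo ⟨by linarith [Real.pi_pos], hx2⟩
  have hkey := aux_key hx hx2
  rw [Real.tan_eq_sin_div_cos]
  rw [gt_iff_lt, div_div_eq_mul_div]
  have heq : 2 * (x / Real.sin x) + x * Real.cos x / Real.sin x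
      = x * (2 + Real.cos x) / Real.sin x := by
    field_simp
  rw [heq, lt_div_iff₀ hs]
  linarith
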